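/- Let E be a 3×3 real matrix such that C = I + 2·E is invertible, and write I₁(A) = trace(A), I₂(A) = (1/2)·((trace A)² − trace(A·A)). Then I₁(C)·I − C − (2/3)·I₂(C)·C⁻¹ = 2·(I₁(E)·I − E) + 4·C⁻¹·(E − (2/3)·I₁(E)·I − (2/3)·I₂(E)·I). -/
import Mathlib


theorem stmt_13 (E C : Matrix (Fin 3) (Fin 3) ℝ)
    (hC : C = 1 + (2 : ℝ) • E) (hCinv : IsUnit C)
    (I₁ I₂ : Matrix (Fin 3) (Fin 3) ℝ → ℝ)
    (hI₁ : ∀ A, I₁ A = Matrix.trace A)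
    (hI₂ : ∀ A, I₂ A = (1 / 2 : ℝ) * ((Matrix.trace A) ^ 2 - Matrix.trace (A * A))) :
    I₁ C • (1 : Matrix (Fin 3) (Fin 3) ℝ) - C - (2 / 3 * I₂ C) • C⁻¹
      = (2 : ℝ) • (I₁ E • (1 : Matrix (Fin 3) (Fin 3) ℝ) - E)
        + (4 : ℝ) • (C⁻¹ * (E - (2 / 3 * I₁ E) • (1 : Matrix (Fin 3) (Fin 3) ℝ)
            - (2 / 3 * I₂ E) • (1 : Matrix (Fin 3) (Fin 3) ℝ))) := by
  have hd : IsUnit C.det := (Matrix.isUnit_iff_isUnit_det C).mp hCinv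
  have h1 : C⁻¹ * C = 1 := Matrix.nonsing_inv_mul C hd
  have h2 : C * C⁻¹ = 1 := Matrix.mul_nonsing_inv C hd
  have cancel : ∀ X Y : Matrix (Fin 3) (Fin 3) ℝ, C * X = C * Y → X = Y := by
    intro X Y h
    have := congrArg (fun Z => C⁻¹ * Z) h
    simpa [← Matrix.mul_assoc, h1] using this
  have htrC : Matrix.trace C = 3 + 2 * Matrix.trace E := by
    simp [hC, Matrix.trace_add, Matrix.trace_smul]
  have htrCC : Matrix.trace (C * C)
      = 3 + 4 * Matrix.trace E + 4 * Matrix.trace (E * E) := by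
    rw [hC]
    simp [add_mul, mul_add, Matrix.smul_mul, Matrix.mul_smul, Matrix.trace_add,
      Matrix.trace_smul, smul_smul]
    ring
  apply cancel
  rw [hI₁, hI₁, hI₂, hI₂, htrC, htrCC]
  rw [mul_sub, mul_sub, Matrix.mul_smul, Matrix.mul_smul, h2, mul_add,
    Matrix.mul_smul, Matrix.mul_smul, ← Matrix.mul_assoc, h2, Matrix.one_mul]
  rw [hC]
  simp only [add_mul, mul_add, mul_sub, sub_mul, Matrix.smul_mul, Matrix.mul_smul, Matrix.one_mul,
    Matrix.mul_one, smul_smul, smul_sub, smul_add]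
  module
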